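/- arXiv:1601.03191 — 2 statements merged into one kernel-verified Lean document; each statement's English description precedes it below -/
import Mathlib

section
/- The assignment g_s ↦ T_s, e_t ↦ 1 (s ∈ S, t ∈ R) induces a surjective k-algebra morphism 𝔭 : C_W(u) → H_W(u). For every w ∈ W it maps g_w to T_w, and it maps each e_J (J a finite subset of R) to 1. Its kernel is the two-sided ideal of C_W(u) generated by the elements e_s − 1 for s ∈ S. -/
open scoped Classical

noncomputable section

namespace CWpaper

variable {B : Type} {M : CoxeterMatrix B} {W : Type} [Group W] (cs : CoxeterSystem M W)
variable (k : Type) [CommRing k]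

/-- The set of reflections of the Coxeter system, as a subtype. -/
abbrev Refl := {t : W // cs.IsReflection t}

/-- Index type for the generators of `C_W(u)`: `inl i` indexes `g` generators,
`inr t` indexes `e` generators. -/
abbrev Gen := B ⊕ Refl cs

/-- The free-algebra generator corresponding to `g_s`. -/
def gf (i : B) : FreeAlgebra k (Gen cs) := FreeAlgebra.ι k (Sum.inl i)

/-- The free-algebra generator corresponding to `e_t`. -/
def ef (t : Refl cs) : FreeAlgebra k (Gen cs) := FreeAlgebra.ι k (Sum.inr t)

/-- A simple reflection, as a reflection. -/
def simpleR (i : B) : Refl cs := ⟨cs.simple i, cs.isReflection_simple i⟩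

/-- Conjugate of a reflection by a group element. -/
def conjR (w : W) (t : Refl cs) : Refl cs := ⟨w * t.1 * w⁻¹, t.2.conj w⟩

/-- The defining relations of the algebra `C_W(u)`. -/
inductive CWrel (u : B → k) : FreeAlgebra k (Gen cs) → FreeAlgebra k (Gen cs) → Prop
  | braid (i j : B) (h : M i j ≠ 0) :
      CWrel u (((CoxeterSystem.alternatingWord i j (M i j)).map (gf cs k)).prod)
              (((CoxeterSystem.alternatingWord j i (M i j)).map (gf cs k)).prod)
  | idem (t : Refl cs) : CWrel u (ef cs k t * ef cs k t) (ef cs k t)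
  | comm (t₁ t₂ : Refl cs) : CWrel u (ef cs k t₁ * ef cs k t₂) (ef cs k t₂ * ef cs k t₁)
  | conj (t t₁ : Refl cs) :
      CWrel u (ef cs k t * ef cs k t₁) (ef cs k t * ef cs k (conjR cs t.1 t₁))
  | move (i : B) (t : Refl cs) :
      CWrel u (gf cs k i * ef cs k t) (ef cs k (conjR cs (cs.simple i) t) * gf cs k i)
  | quad (i : B) :
      CWrel u (gf cs k i * gf cs k i)
        (1 + algebraMap k _ (u i - 1) * ef cs k (simpleR cs i) * (1 + gf cs k i))

variable (u : B → k)

/-- The algebra `C_W(u)`. -/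
abbrev CW := RingQuot (CWrel cs k u)

/-- The generator `g_s` of `C_W(u)`. -/
def gCW (i : B) : CW cs k u := RingQuot.mkAlgHom k (CWrel cs k u) (gf cs k i)

/-- The generator `e_t` of `C_W(u)`. -/
def eCW (t : Refl cs) : CW cs k u := RingQuot.mkAlgHom k (CWrel cs k u) (ef cs k t)

theorem eCW_commute (t₁ t₂ : Refl cs) : Commute (eCW cs k u t₁) (eCW cs k u t₂) := by
  have h := RingQuot.mkAlgHom_rel k (CWrel.comm (cs := cs) (k := k) (u := u) t₁ t₂)
  simp only [map_mul] at h
  exact h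

/-- The product `e_J = ∏_{t ∈ J} e_t` for a finite set of reflections `J`. -/
def eJ (J : Finset (Refl cs)) : CW cs k u :=
  J.noncommProd (eCW cs k u) (fun t₁ _ t₂ _ _ => eCW_commute cs k u t₁ t₂)

/-- `gg : W → C_W(u)` is the family `(g_w)_{w ∈ W}` iff for every reduced word
`l` for `w`, `gg w` is the product of the `g_s`, `s ∈ l`. -/
def IsGFamily (gg : W → CW cs k u) : Prop :=
  ∀ l : List B, cs.IsReduced l → gg (cs.wordProd l) = (l.map (gCW cs k u)).prod

end CWpaper

namespace CWpaper

/-- The defining relations of the Iwahori–Hecke algebra `H_W(u)`. -/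
inductive Hrel {B : Type} (M : CoxeterMatrix B) (k : Type) [CommRing k] (u : B → k) :
    FreeAlgebra k B → FreeAlgebra k B → Prop
  | braid (i j : B) (h : M i j ≠ 0) :
      Hrel M k u (((CoxeterSystem.alternatingWord i j (M i j)).map (FreeAlgebra.ι k)).prod)
                 (((CoxeterSystem.alternatingWord j i (M i j)).map (FreeAlgebra.ι k)).prod)
  | quad (i : B) :
      Hrel M k u (FreeAlgebra.ι k i * FreeAlgebra.ι k i)
        (algebraMap k _ (u i) + algebraMap k _ (u i - 1) * FreeAlgebra.ι k i)

/-- The Iwahori–Hecke algebra `H_W(u)`. -/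
abbrev HW {B : Type} (M : CoxeterMatrix B) (k : Type) [CommRing k] (u : B → k) :=
  RingQuot (Hrel M k u)

/-- The generator `T_s` of the Iwahori–Hecke algebra. -/
def THW {B : Type} (M : CoxeterMatrix B) (k : Type) [CommRing k] (u : B → k) (i : B) :
    HW M k u :=
  RingQuot.mkAlgHom k (Hrel M k u) (FreeAlgebra.ι k i)

end CWpaper

namespace CWpaper

/-- `TT : W → H_W(u)` is the family `(T_w)_{w ∈ W}` iff for every reduced word `l` for `w`,
`TT w` is the product of the `T_s`, `s ∈ l`. -/
def IsTFamily {B : Type} {M : CoxeterMatrix B} {W : Type} [Group W] (cs : CoxeterSystem M W)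
    (k : Type) [CommRing k] (u : B → k) (TT : W → HW M k u) : Prop :=
  ∀ l : List B, cs.IsReduced l → TT (cs.wordProd l) = (l.map (THW M k u)).prod

section Aux

variable {B : Type} {M : CoxeterMatrix B} {W : Type} [Group W] (cs : CoxeterSystem M W)
variable (k : Type) [CommRing k] (u : B → k)

lemma conjR_mul (a b : W) (t : Refl cs) :
    conjR cs (a * b) t = conjR cs a (conjR cs b t) := by
  apply Subtype.ext
  show (a * b) * t.1 * (a * b)⁻¹ = a * (b * t.1 * b⁻¹) * a⁻¹
  group

lemma eCW_conj_simple (i : B) (t : Refl cs) :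
    eCW cs k u (simpleR cs i) * eCW cs k u t
      = eCW cs k u (simpleR cs i) * eCW cs k u (conjR cs (cs.simple i) t) := by
  have h := RingQuot.mkAlgHom_rel k (CWrel.conj (cs := cs) (k := k) (u := u) (simpleR cs i) t)
  simp only [map_mul] at h
  exact h

lemma gCW_quad (i : B) :
    gCW cs k u i * gCW cs k u i
      = 1 + algebraMap k _ (u i - 1) * eCW cs k u (simpleR cs i) * (1 + gCW cs k u i) := by
  have h := RingQuot.mkAlgHom_rel k (CWrel.quad (cs := cs) (k := k) (u := u) i)
  simpa only [map_mul, map_add, map_one, AlgHom.commutes, gCW, eCW] using h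

lemma gCW_braid (i j : B) (h : M i j ≠ 0) :
    ((CoxeterSystem.alternatingWord i j (M i j)).map (gCW cs k u)).prod
      = ((CoxeterSystem.alternatingWord j i (M i j)).map (gCW cs k u)).prod := by
  have hr := RingQuot.mkAlgHom_rel k (CWrel.braid (cs := cs) (k := k) (u := u) i j h)
  rw [map_list_prod, map_list_prod, List.map_map, List.map_map] at hr
  exact hr

lemma THW_quad (i : B) :
    THW M k u i * THW M k u i
      = algebraMap k _ (u i) + algebraMap k _ (u i - 1) * THW M k u i := by
  have h := RingQuot.mkAlgHom_rel k (Hrel.quad (M := M) (k := k) (u := u) i)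
  simpa only [map_mul, map_add, AlgHom.commutes, THW] using h

lemma THW_braid (i j : B) (h : M i j ≠ 0) :
    ((CoxeterSystem.alternatingWord i j (M i j)).map (THW M k u)).prod
      = ((CoxeterSystem.alternatingWord j i (M i j)).map (THW M k u)).prod := by
  have hr := RingQuot.mkAlgHom_rel k (Hrel.braid (M := M) (k := k) (u := u) i j h)
  rw [map_list_prod, map_list_prod, List.map_map, List.map_map] at hr
  exact hr

/-- The lift of the assignment `g_s ↦ T_s`, `e_t ↦ 1` to the free algebra. -/
def pFree : FreeAlgebra k (Gen cs) →ₐ[k] HW M k u :=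
  FreeAlgebra.lift k (Sum.elim (THW M k u) fun _ => (1 : HW M k u))

@[simp] lemma pFree_g (i : B) : pFree cs k u (gf cs k i) = THW M k u i := by
  simp [pFree, gf]

@[simp] lemma pFree_e (t : Refl cs) : pFree cs k u (ef cs k t) = 1 := by
  simp [pFree, ef]

lemma pFree_rel : ∀ ⦃a b : FreeAlgebra k (Gen cs)⦄, CWrel cs k u a b →
    pFree cs k u a = pFree cs k u b := by
  intro a b h
  cases h with
  | braid i j hij =>
    rw [map_list_prod, map_list_prod, List.map_map, List.map_map]
    have hc : pFree cs k u ∘ gf cs k = THW M k u := funext fun i => pFree_g cs k u i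
    rw [hc]
    exact THW_braid k u i j hij
  | idem t => simp
  | comm t₁ t₂ => simp
  | conj t t₁ => simp
  | move i t => simp
  | quad i =>
    simp only [map_mul, map_add, map_one, AlgHom.commutes, pFree_g, pFree_e]
    rw [THW_quad k u i, map_sub, map_one]
    noncomm_ring

/-- The morphism `𝔭 : C_W(u) → H_W(u)`. -/
def pCW : CW cs k u →ₐ[k] HW M k u :=
  RingQuot.liftAlgHom k ⟨pFree cs k u, pFree_rel cs k u⟩

@[simp] lemma pCW_g (i : B) : pCW cs k u (gCW cs k u i) = THW M k u i := by
  rw [gCW, pCW, RingQuot.liftAlgHom_mkAlgHom_apply]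
  exact pFree_g cs k u i

@[simp] lemma pCW_e (t : Refl cs) : pCW cs k u (eCW cs k u t) = 1 := by
  rw [eCW, pCW, RingQuot.liftAlgHom_mkAlgHom_apply]
  exact pFree_e cs k u t

/-- The two-sided ideal generated by the `e_s − 1`. -/
def Ise : TwoSidedIdeal (CW cs k u) :=
  TwoSidedIdeal.span {x : CW cs k u | ∃ i : B, x = eCW cs k u (simpleR cs i) - 1}

lemma eCW_simpleR_sub_one_mem (i : B) : eCW cs k u (simpleR cs i) - 1 ∈ Ise cs k u :=
  TwoSidedIdeal.subset_span ⟨i, rfl⟩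

lemma eCW_conj_sub_one_mem (l : List B) (i : B) :
    eCW cs k u (conjR cs (cs.wordProd l) (simpleR cs i)) - 1 ∈ Ise cs k u := by
  induction l with
  | nil =>
    have h : conjR cs (cs.wordProd []) (simpleR cs i) = simpleR cs i := by
      apply Subtype.ext
      simp [conjR, CoxeterSystem.wordProd_nil]
    rw [h]
    exact eCW_simpleR_sub_one_mem cs k u i
  | cons j l ih =>
    rw [CoxeterSystem.wordProd_cons, conjR_mul]
    set t' := conjR cs (cs.wordProd l) (simpleR cs i) with ht'
    set t'' := conjR cs (cs.simple j) t' with ht''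
    have h1 : eCW cs k u (simpleR cs j) * eCW cs k u t'
        = eCW cs k u (simpleR cs j) * eCW cs k u t'' := eCW_conj_simple cs k u j t'
    have hj : eCW cs k u (simpleR cs j) - 1 ∈ Ise cs k u := eCW_simpleR_sub_one_mem cs k u j
    have expand : eCW cs k u t'' - 1
        = -((eCW cs k u (simpleR cs j) - 1) * eCW cs k u t'')
          + (eCW cs k u (simpleR cs j) - 1) * eCW cs k u t' + (eCW cs k u t' - 1) := by
      rw [sub_mul, sub_mul, one_mul, one_mul, h1]
      abel
    rw [expand]
    exact (Ise cs k u).add_mem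
      ((Ise cs k u).add_mem
        ((Ise cs k u).neg_mem ((Ise cs k u).mul_mem_right _ _ hj))
        ((Ise cs k u).mul_mem_right _ _ hj))
      ih

lemma eCW_sub_one_mem (t : Refl cs) : eCW cs k u t - 1 ∈ Ise cs k u := by
  obtain ⟨w, i, hw⟩ := t.2
  obtain ⟨l, rfl⟩ := cs.wordProd_surjective w
  have h : conjR cs (cs.wordProd l) (simpleR cs i) = t := Subtype.ext hw.symm
  rw [← h]
  exact eCW_conj_sub_one_mem cs k u l i

/-- Quotient of `C_W(u)` by the ideal generated by the `e_s − 1`. -/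
abbrev QIse := (Ise cs k u).ringCon.Quotient

noncomputable instance : Algebra k (QIse cs k u) :=
  RingHom.toAlgebra' ((Ise cs k u).ringCon.mk'.comp (algebraMap k (CW cs k u)))
    (by
      intro r x
      obtain ⟨a, rfl⟩ := (Quotient.mk''_surjective (s₁ := (Ise cs k u).ringCon.toSetoid)) x
      show (Ise cs k u).ringCon.mk' (algebraMap k (CW cs k u) r) * (Ise cs k u).ringCon.mk' a
        = (Ise cs k u).ringCon.mk' a * (Ise cs k u).ringCon.mk' (algebraMap k (CW cs k u) r)
      rw [← map_mul, ← map_mul, Algebra.commutes])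

/-- The quotient map, as an algebra morphism. -/
def piA : CW cs k u →ₐ[k] QIse cs k u :=
  { (Ise cs k u).ringCon.mk' with commutes' := fun _ => rfl }

lemma piA_apply (x : CW cs k u) : piA cs k u x = (Ise cs k u).ringCon.mk' x := rfl

lemma piA_e (t : Refl cs) : piA cs k u (eCW cs k u t) = 1 := by
  have h : (Ise cs k u).ringCon (eCW cs k u t) 1 :=
    ((Ise cs k u).rel_iff _ _).2 (eCW_sub_one_mem cs k u t)
  have := RingCon.eq (c := (Ise cs k u).ringCon) (a := eCW cs k u t) (b := 1) |>.2 h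
  simpa [piA_apply] using this

/-- The lift of `T_s ↦ π(g_s)` to the free algebra. -/
def qFree : FreeAlgebra k B →ₐ[k] QIse cs k u :=
  FreeAlgebra.lift k (fun i => piA cs k u (gCW cs k u i))

@[simp] lemma qFree_ι (i : B) : qFree cs k u (FreeAlgebra.ι k i) = piA cs k u (gCW cs k u i) := by
  simp [qFree]

lemma qFree_rel : ∀ ⦃a b : FreeAlgebra k B⦄, Hrel M k u a b →
    qFree cs k u a = qFree cs k u b := by
  intro a b h
  cases h with
  | braid i j hij =>
    rw [map_list_prod, map_list_prod, List.map_map, List.map_map]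
    have hc : qFree cs k u ∘ FreeAlgebra.ι k = fun i => piA cs k u (gCW cs k u i) :=
      funext fun i => qFree_ι cs k u i
    rw [hc]
    have := congrArg (piA cs k u) (gCW_braid cs k u i j hij)
    rw [map_list_prod, map_list_prod, List.map_map, List.map_map] at this
    exact this
  | quad i =>
    simp only [map_add, map_mul, qFree_ι, AlgHom.commutes]
    rw [← map_mul, gCW_quad cs k u i]
    simp only [map_add, map_mul, map_one, AlgHom.commutes, piA_e]
    rw [map_sub, map_one]
    noncomm_ring

/-- The induced morphism `H_W(u) → C_W(u)/(e_s − 1)`. -/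
def qHW : HW M k u →ₐ[k] QIse cs k u :=
  RingQuot.liftAlgHom k ⟨qFree cs k u, qFree_rel cs k u⟩

@[simp] lemma qHW_T (i : B) : qHW cs k u (THW M k u i) = piA cs k u (gCW cs k u i) := by
  rw [THW, qHW, RingQuot.liftAlgHom_mkAlgHom_apply]
  exact qFree_ι cs k u i

lemma qHW_pCW (x : CW cs k u) : qHW cs k u (pCW cs k u x) = piA cs k u x := by
  obtain ⟨y, rfl⟩ := RingQuot.mkAlgHom_surjective k (CWrel cs k u) x
  induction y using FreeAlgebra.induction with
  | grade0 r => simp only [AlgHom.commutes]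
  | grade1 g =>
    cases g with
    | inl i =>
      show qHW cs k u (pCW cs k u (gCW cs k u i)) = piA cs k u (gCW cs k u i)
      rw [pCW_g, qHW_T]
    | inr t =>
      show qHW cs k u (pCW cs k u (eCW cs k u t)) = piA cs k u (eCW cs k u t)
      rw [pCW_e, map_one, piA_e]
  | mul a b ha hb => simp only [map_mul, ha, hb]
  | add a b ha hb => simp only [map_add, ha, hb]

end Aux

/-- The assignment `g_s ↦ T_s`, `e_t ↦ 1` induces a surjective `k`-algebra
morphism `𝔭 : C_W(u) → H_W(u)`; it maps `g_w` to `T_w` for every `w ∈ W`, maps each `e_J`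
to `1`, and its kernel is the two-sided ideal generated by the `e_s − 1`, `s ∈ S`. -/
theorem statement4 {B : Type} {M : CoxeterMatrix B} {W : Type} [Group W]
    (cs : CoxeterSystem M W) (k : Type) [CommRing k] (u : B → k)
    (hu : ∀ i j : B, IsConj (cs.simple i) (cs.simple j) → u i = u j) :
    ∃ p : CW cs k u →ₐ[k] HW M k u,
      (∀ i : B, p (gCW cs k u i) = THW M k u i) ∧
      (∀ t : Refl cs, p (eCW cs k u t) = 1) ∧
      Function.Surjective p ∧
      (∀ gg : W → CW cs k u, IsGFamily cs k u gg →
        ∀ TT : W → HW M k u, IsTFamily cs k u TT →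
          ∀ w : W, p (gg w) = TT w) ∧
      (∀ J : Finset (Refl cs), p (eJ cs k u J) = 1) ∧
      TwoSidedIdeal.ker p =
        TwoSidedIdeal.span {x : CW cs k u | ∃ i : B, x = eCW cs k u (simpleR cs i) - 1} := by
  refine ⟨pCW cs k u, pCW_g cs k u, pCW_e cs k u, ?_, ?_, ?_, ?_⟩
  · -- surjectivity
    intro x
    obtain ⟨y, rfl⟩ := RingQuot.mkAlgHom_surjective k (Hrel M k u) x
    induction y using FreeAlgebra.induction with
    | grade0 r => exact ⟨algebraMap k _ r, by simp only [AlgHom.commutes]⟩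
    | grade1 i => exact ⟨gCW cs k u i, pCW_g cs k u i⟩
    | mul a b ha hb =>
      obtain ⟨a', ha'⟩ := ha
      obtain ⟨b', hb'⟩ := hb
      exact ⟨a' * b', by rw [map_mul, ha', hb', map_mul]⟩
    | add a b ha hb =>
      obtain ⟨a', ha'⟩ := ha
      obtain ⟨b', hb'⟩ := hb
      exact ⟨a' + b', by rw [map_add, ha', hb', map_add]⟩
  · -- g-families map to T-families
    intro gg hgg TT hTT w
    obtain ⟨l, hl, rfl⟩ := cs.exists_reduced_word' w
    rw [hgg l hl, hTT l hl, map_list_prod, List.map_map]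
    have hc : pCW cs k u ∘ gCW cs k u = THW M k u := funext fun i => pCW_g cs k u i
    rw [hc]
  · -- e_J maps to 1
    intro J
    rw [eJ]
    refine (Finset.map_noncommProd _ _ _ (pCW cs k u)).trans ?_
    refine (Finset.noncommProd_eq_pow_card _ _ _ 1 (fun t _ => pCW_e cs k u t)).trans ?_
    rw [one_pow]
  · -- kernel
    apply le_antisymm
    · intro x hx
      rw [TwoSidedIdeal.mem_ker] at hx
      have h0 : piA cs k u x = 0 := by
        rw [← qHW_pCW cs k u x, hx, map_zero]
      have : x ∈ TwoSidedIdeal.ker (Ise cs k u).ringCon.mk' := by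
        rw [TwoSidedIdeal.mem_ker]
        exact h0
      rwa [TwoSidedIdeal.ker_ringCon_mk'] at this
    · intro x hx
      rw [TwoSidedIdeal.mem_span_iff] at hx
      refine hx _ ?_
      rintro y ⟨i, rfl⟩
      rw [SetLike.mem_coe, TwoSidedIdeal.mem_ker, map_sub, pCW_e, map_one, sub_self]

end CWpaper
end
end

section
/- There exists an involutive ring automorphism of C_W over k = ℤ[v_s^{±1} : s ∈ S] which maps v_s ↦ v_s⁻¹, H_w ↦ (H_{w⁻¹})⁻¹ for every w ∈ W, and e_{W₀} ↦ e_{W₀} for every finitely generated reflection subgroup W₀ ∈ 𝒲. Moreover it is compatible with Lusztig's involution of the Iwahori–Hecke algebra H_W (the ring involution determined by v_s ↦ v_s⁻¹ and H⁰_w ↦ (H⁰_{w⁻¹})⁻¹): the projection 𝔭 : C_W → H_W intertwines the two involutions. -/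
open scoped Classical

noncomputable section

namespace CWpaper

/-- The parameters `u_s = v_s²`. -/
def usq {B : Type} (k : Type) [CommRing k] (v : B → kˣ) : B → k := fun i => (v i : k) ^ 2


section Aux

variable {B : Type} {M : CoxeterMatrix B} {W : Type} [Group W] (cs : CoxeterSystem M W)
variable (k : Type) [CommRing k] (v : B → kˣ)

lemma conjR_simple_self (i : B) :
    conjR cs (cs.simple i) (simpleR cs i) = simpleR cs i := by
  apply Subtype.ext
  show cs.simple i * cs.simple i * (cs.simple i)⁻¹ = cs.simple i
  rw [cs.simple_mul_simple_self, one_mul, cs.inv_simple]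

lemma conjR_conjR (i : B) (t : Refl cs) :
    conjR cs (cs.simple i) (conjR cs (cs.simple i) t) = t := by
  apply Subtype.ext
  show cs.simple i * (cs.simple i * t.1 * (cs.simple i)⁻¹) * (cs.simple i)⁻¹ = t.1
  rw [cs.inv_simple]
  rw [show cs.simple i * (cs.simple i * t.1 * cs.simple i) * cs.simple i
      = cs.simple i * cs.simple i * t.1 * (cs.simple i * cs.simple i) by group]
  rw [cs.simple_mul_simple_self, one_mul, mul_one]

variable (u : B → k)

lemma e_mul_e (t : Refl cs) : eCW cs k u t * eCW cs k u t = eCW cs k u t := by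
  have := RingQuot.mkAlgHom_rel k (CWrel.idem (cs := cs) (k := k) (u := u) t)
  simpa only [map_mul, eCW] using this

lemma g_mul_e (i : B) (t : Refl cs) :
    gCW cs k u i * eCW cs k u t = eCW cs k u (conjR cs (cs.simple i) t) * gCW cs k u i := by
  have := RingQuot.mkAlgHom_rel k (CWrel.move (cs := cs) (k := k) (u := u) i t)
  simpa only [map_mul, eCW, gCW] using this

lemma quadCW (i : B) :
    gCW cs k u i * gCW cs k u i =
      1 + (u i - 1) • (eCW cs k u (simpleR cs i) * (1 + gCW cs k u i)) := by
  have := RingQuot.mkAlgHom_rel k (CWrel.quad (cs := cs) (k := k) (u := u) i)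
  simp only [map_mul, map_add, map_one, AlgHom.commutes] at this
  unfold gCW eCW
  rw [this, Algebra.smul_def, ← mul_assoc]

lemma g_e_comm (i : B) :
    gCW cs k u i * eCW cs k u (simpleR cs i) = eCW cs k u (simpleR cs i) * gCW cs k u i := by
  have := g_mul_e cs k u i (simpleR cs i)
  rwa [conjR_simple_self] at this

lemma key_lemma (i : B) :
    eCW cs k u (simpleR cs i) * (gCW cs k u i + gCW cs k u i * gCW cs k u i)
      = u i • (eCW cs k u (simpleR cs i) * (1 + gCW cs k u i)) := by
  set e := eCW cs k u (simpleR cs i) with he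
  set g := gCW cs k u i with hg
  have hee : e * e = e := e_mul_e cs k u _
  have h1 : e * (e * (1 + g)) = e * (1 + g) := by rw [← mul_assoc, hee]
  calc e * (g + g * g) = e * g + e * (g * g) := by rw [mul_add]
    _ = e * g + (e + (u i - 1) • (e * (1 + g))) := by
        rw [quadCW cs k u i, mul_add, mul_one, mul_smul_comm, h1]
    _ = u i • (e * (1 + g)) := by
        simp only [mul_add, mul_one, smul_add]; module

/-- The inverse of the generator `g_i`, when `u i = v_i²` for units `v_i`. -/
def gInv (i : B) : CW cs k (usq k v) :=
  gCW cs k (usq k v) i +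
    ((((v i)⁻¹ : kˣ) : k) ^ 2 - 1) •
      (eCW cs k (usq k v) (simpleR cs i) * (1 + gCW cs k (usq k v) i))

lemma cu_one (i : B) : (((v i)⁻¹ : kˣ) : k) ^ 2 * usq k v i = 1 := by
  have : ((((v i)⁻¹ : kˣ) : k) * ((v i : kˣ) : k)) ^ 2 = 1 := by
    rw [← Units.val_mul, inv_mul_cancel]; simp
  rw [usq]; rw [mul_pow] at this; exact this

lemma g_mul_gInv (i : B) : gCW cs k (usq k v) i * gInv cs k v i = 1 := by
  set e := eCW cs k (usq k v) (simpleR cs i) with he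
  set g := gCW cs k (usq k v) i with hg
  set c : k := (((v i)⁻¹ : kˣ) : k) ^ 2 with hc
  have hge : g * (e * (1 + g)) = usq k v i • (e * (1 + g)) := by
    rw [← mul_assoc, g_e_comm cs k (usq k v) i, mul_assoc, mul_add, mul_one]
    exact key_lemma cs k (usq k v) i
  have : g * gInv cs k v i
      = 1 + ((usq k v i - 1) + (c - 1) * usq k v i) • (e * (1 + g)) := by
    rw [gInv, mul_add, mul_smul_comm, hge, quadCW cs k (usq k v) i, smul_smul, add_smul, add_assoc]
  have hz : (usq k v i - 1) + (c - 1) * usq k v i = 0 := by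
    have := cu_one k v i; rw [hc]; linear_combination this
  rw [this, hz, zero_smul, add_zero]

lemma gInv_mul_g (i : B) : gInv cs k v i * gCW cs k (usq k v) i = 1 := by
  set e := eCW cs k (usq k v) (simpleR cs i) with he
  set g := gCW cs k (usq k v) i with hg
  set c : k := (((v i)⁻¹ : kˣ) : k) ^ 2 with hc
  have hge : (e * (1 + g)) * g = usq k v i • (e * (1 + g)) := by
    rw [mul_assoc, add_mul, one_mul]
    exact key_lemma cs k (usq k v) i
  have : gInv cs k v i * g
      = 1 + ((usq k v i - 1) + (c - 1) * usq k v i) • (e * (1 + g)) := by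
    rw [gInv, add_mul, smul_mul_assoc, hge, quadCW cs k (usq k v) i, smul_smul, add_smul, add_assoc]
  have hz : (usq k v i - 1) + (c - 1) * usq k v i = 0 := by
    have := cu_one k v i; rw [hc]; linear_combination this
  rw [this, hz, zero_smul, add_zero]

lemma e_gInv_comm (i : B) :
    eCW cs k (usq k v) (simpleR cs i) * gInv cs k v i
      = gInv cs k v i * eCW cs k (usq k v) (simpleR cs i) := by
  set e := eCW cs k (usq k v) (simpleR cs i)
  set g := gCW cs k (usq k v) i
  set gi := gInv cs k v i
  have h1 : g * gi = 1 := g_mul_gInv cs k v i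
  have h2 : gi * g = 1 := gInv_mul_g cs k v i
  have h3 : g * e = e * g := g_e_comm cs k (usq k v) i
  calc e * gi = (gi * g) * e * gi := by rw [h2, one_mul]
    _ = gi * (g * e) * gi := by rw [mul_assoc gi]
    _ = gi * (e * g) * gi := by rw [h3]
    _ = gi * e * (g * gi) := by rw [mul_assoc, mul_assoc, mul_assoc]
    _ = gi * e := by rw [h1, mul_one]

lemma gInv_move (i : B) (t : Refl cs) :
    gInv cs k v i * eCW cs k (usq k v) t
      = eCW cs k (usq k v) (conjR cs (cs.simple i) t) * gInv cs k v i := by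
  set g := gCW cs k (usq k v) i
  set gi := gInv cs k v i
  have h1 : g * gi = 1 := g_mul_gInv cs k v i
  have h2 : gi * g = 1 := gInv_mul_g cs k v i
  have key : ∀ t' : Refl cs,
      eCW cs k (usq k v) t' * gi = gi * eCW cs k (usq k v) (conjR cs (cs.simple i) t') := by
    intro t'
    have hmove := g_mul_e cs k (usq k v) i t'
    calc eCW cs k (usq k v) t' * gi
        = gi * (g * eCW cs k (usq k v) t') * gi := by rw [← mul_assoc, h2, one_mul]
      _ = gi * (eCW cs k (usq k v) (conjR cs (cs.simple i) t') * g) * gi := by rw [hmove]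
      _ = gi * eCW cs k (usq k v) (conjR cs (cs.simple i) t') * (g * gi) := by
          rw [← mul_assoc, mul_assoc _ g gi, ← mul_assoc]
      _ = gi * eCW cs k (usq k v) (conjR cs (cs.simple i) t') := by rw [h1, mul_one]
  have := (key (conjR cs (cs.simple i) t)).symm
  rwa [conjR_conjR] at this

lemma gInv_sq (i : B) :
    gInv cs k v i * gInv cs k v i
      = 1 + ((((v i)⁻¹ : kˣ) : k) ^ 2 - 1) •
          (eCW cs k (usq k v) (simpleR cs i) * (1 + gInv cs k v i)) := by
  set e := eCW cs k (usq k v) (simpleR cs i) with he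
  set g := gCW cs k (usq k v) i with hg
  set gi := gInv cs k v i with hgi
  set c : k := (((v i)⁻¹ : kˣ) : k) ^ 2 with hc
  have h1 : g * gi = 1 := g_mul_gInv cs k v i
  have h2 : gi * g = 1 := gInv_mul_g cs k v i
  have h3 : g * e = e * g := g_e_comm cs k (usq k v) i
  set Y : CW cs k (usq k v) := 1 + (c - 1) • (e * (1 + gi)) with hY
  have hgY : g * Y = g + (c - 1) • (e * (1 + g)) := by
    have : g * (e * (1 + gi)) = e * (1 + g) := by
      rw [← mul_assoc, h3, mul_assoc, mul_add, mul_one, h1, add_comm (1 : CW cs k (usq k v)) g,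
        mul_add, mul_one]
    rw [hY, mul_add, mul_one, mul_smul_comm, this]
  have hggY : g * (g * Y) = 1 := by
    have hkey := key_lemma cs k (usq k v) i
    have hge : g * (e * (1 + g)) = usq k v i • (e * (1 + g)) := by
      rw [← mul_assoc, h3, mul_assoc, mul_add, mul_one]
      exact hkey
    rw [hgY, mul_add, mul_smul_comm, hge, quadCW cs k (usq k v) i, smul_smul, add_assoc,
      ← add_smul]
    have hz' : (usq k v i - 1) + (c - 1) * usq k v i = 0 := by
      have := cu_one k v i; rw [hc]; linear_combination this
    rw [hz', zero_smul, add_zero]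
  calc gi * gi = gi * (gi * (g * (g * Y))) := by rw [hggY, mul_one]
    _ = gi * ((gi * g) * (g * Y)) := by rw [mul_assoc]
    _ = gi * (g * Y) := by rw [h2, one_mul]
    _ = (gi * g) * Y := by rw [mul_assoc]
    _ = Y := by rw [h2, one_mul]

lemma gInv_recover (i : B) :
    gInv cs k v i + (usq k v i - 1) •
        (eCW cs k (usq k v) (simpleR cs i) * (1 + gInv cs k v i))
      = gCW cs k (usq k v) i := by
  set e := eCW cs k (usq k v) (simpleR cs i) with he
  set g := gCW cs k (usq k v) i with hg
  set gi := gInv cs k v i with hgi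
  have h1 : g * gi = 1 := g_mul_gInv cs k v i
  have h2 : gi * g = 1 := gInv_mul_g cs k v i
  have h3 : g * e = e * g := g_e_comm cs k (usq k v) i
  set X : CW cs k (usq k v) := gi + (usq k v i - 1) • (e * (1 + gi)) with hX
  have hgX : g * X = g * g := by
    have : g * (e * (1 + gi)) = e * (1 + g) := by
      rw [← mul_assoc, h3, mul_assoc, mul_add, mul_one, h1, add_comm (1 : CW cs k (usq k v)) g,
        mul_add, mul_one]
    rw [hX, mul_add, mul_smul_comm, this, h1, quadCW cs k (usq k v) i]
  calc X = (gi * g) * X := by rw [h2, one_mul]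
    _ = gi * (g * X) := by rw [mul_assoc]
    _ = gi * (g * g) := by rw [hgX]
    _ = (gi * g) * g := by rw [mul_assoc]
    _ = g := by rw [h2, one_mul]

/-- `g_i` as a unit. -/
def Gu (i : B) : (CW cs k (usq k v))ˣ :=
  ⟨gCW cs k (usq k v) i, gInv cs k v i, g_mul_gInv cs k v i, gInv_mul_g cs k v i⟩

lemma altRev (i j : B) (m : ℕ) :
    (CoxeterSystem.alternatingWord i j m).reverse =
      if Even m then CoxeterSystem.alternatingWord j i m
      else CoxeterSystem.alternatingWord i j m := by
  induction m generalizing i j with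
  | zero => simp [CoxeterSystem.alternatingWord]
  | succ m ih =>
    rcases Nat.even_or_odd m with hm | hm
    · rw [if_neg (by simp [Nat.even_add_one, hm])]
      conv_lhs => rw [CoxeterSystem.alternatingWord_succ]
      rw [List.concat_eq_append, List.reverse_concat, ih, if_pos hm,
        CoxeterSystem.alternatingWord_succ', if_pos hm]
    · rw [if_pos (by simpa [Nat.even_add_one, Nat.not_even_iff_odd] using hm)]
      conv_lhs => rw [CoxeterSystem.alternatingWord_succ]
      rw [List.concat_eq_append, List.reverse_concat, ih,
        if_neg (by simpa [Nat.not_even_iff_odd] using hm),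
        CoxeterSystem.alternatingWord_succ', if_neg (by simpa [Nat.not_even_iff_odd] using hm)]

lemma braidCW (i j : B) (h : M i j ≠ 0) :
    ((CoxeterSystem.alternatingWord i j (M i j)).map (gCW cs k (usq k v))).prod
      = ((CoxeterSystem.alternatingWord j i (M i j)).map (gCW cs k (usq k v))).prod := by
  have := RingQuot.mkAlgHom_rel k (CWrel.braid (cs := cs) (k := k) (u := usq k v) i j h)
  rw [map_list_prod, map_list_prod, List.map_map, List.map_map] at this
  exact this

lemma val_Gu_prod (l : List B) :
    (((l.map (Gu cs k v)).prod : (CW cs k (usq k v))ˣ) : CW cs k (usq k v))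
      = (l.map (gCW cs k (usq k v))).prod := by
  rw [show ((((l.map (Gu cs k v)).prod : (CW cs k (usq k v))ˣ)) : CW cs k (usq k v))
      = Units.coeHom _ ((l.map (Gu cs k v)).prod) from rfl, map_list_prod, List.map_map]
  rfl

lemma val_Gu_prod_inv (l : List B) :
    ((((l.map (Gu cs k v)).prod)⁻¹ : (CW cs k (usq k v))ˣ) : CW cs k (usq k v))
      = (l.reverse.map (gInv cs k v)).prod := by
  rw [List.prod_inv_reverse, show (((l.map (Gu cs k v)).map fun x => x⁻¹).reverse
      = l.reverse.map fun i => (Gu cs k v i)⁻¹) by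
    rw [List.map_map, ← List.map_reverse]; rfl]
  rw [show (((((l.reverse.map fun i => (Gu cs k v i)⁻¹)).prod : (CW cs k (usq k v))ˣ))
        : CW cs k (usq k v))
      = Units.coeHom _ (((l.reverse.map fun i => (Gu cs k v i)⁻¹)).prod) from rfl,
    map_list_prod, List.map_map]
  rfl

lemma braid_Gu (i j : B) (h : M i j ≠ 0) :
    ((CoxeterSystem.alternatingWord i j (M i j)).map (Gu cs k v)).prod
      = ((CoxeterSystem.alternatingWord j i (M i j)).map (Gu cs k v)).prod := by
  apply Units.ext
  rw [val_Gu_prod, val_Gu_prod]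
  exact braidCW cs k v i j h

lemma braid_gInv (i j : B) (h : M i j ≠ 0) :
    ((CoxeterSystem.alternatingWord i j (M i j)).map (gInv cs k v)).prod
      = ((CoxeterSystem.alternatingWord j i (M i j)).map (gInv cs k v)).prod := by
  have h0 := congrArg (fun x : (CW cs k (usq k v))ˣ => ((x⁻¹ : (CW cs k (usq k v))ˣ)
    : CW cs k (usq k v))) (braid_Gu cs k v i j h)
  simp only [val_Gu_prod_inv] at h0
  rw [altRev, altRev] at h0
  rcases Nat.even_or_odd (M i j) with hm | hm
  · rw [if_pos hm, if_pos hm] at h0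
    exact h0.symm
  · rw [if_neg (by simpa [Nat.not_even_iff_odd] using hm),
      if_neg (by simpa [Nat.not_even_iff_odd] using hm)] at h0
    exact h0

variable (ι₀ : k ≃+* k)

/-- The target map on free-algebra generators. -/
def phiGen : Gen cs → CW cs k (usq k v) :=
  Sum.elim (fun i => gInv cs k v i) (fun t => eCW cs k (usq k v) t)

/-- The twisted algebra structure. -/
def tAlg : Algebra k (CW cs k (usq k v)) :=
  RingHom.toAlgebra' ((algebraMap k (CW cs k (usq k v))).comp ι₀.toRingHom)
    (fun c x => by
      simp only [RingHom.coe_comp, Function.comp_apply, RingEquiv.coe_toRingHom]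
      exact Algebra.commutes (ι₀ c) x)

/-- The twisted lift on the free algebra. -/
def phi0 : FreeAlgebra k (Gen cs) →+* CW cs k (usq k v) :=
  letI : Algebra k (CW cs k (usq k v)) := tAlg cs k v ι₀
  (FreeAlgebra.lift k (phiGen cs k v)).toRingHom

lemma phi0_ι (x : Gen cs) :
    phi0 cs k v ι₀ (FreeAlgebra.ι k x) = phiGen cs k v x := by
  letI : Algebra k (CW cs k (usq k v)) := tAlg cs k v ι₀
  exact FreeAlgebra.lift_ι_apply _ _

lemma phi0_algebraMap (c : k) :
    phi0 cs k v ι₀ (algebraMap k (FreeAlgebra k (Gen cs)) c)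
      = algebraMap k (CW cs k (usq k v)) (ι₀ c) := by
  letI : Algebra k (CW cs k (usq k v)) := tAlg cs k v ι₀
  exact (FreeAlgebra.lift k (phiGen cs k v)).commutes c

lemma phi0_gf (i : B) : phi0 cs k v ι₀ (gf cs k i) = gInv cs k v i := phi0_ι cs k v ι₀ _

lemma phi0_ef (t : Refl cs) : phi0 cs k v ι₀ (ef cs k t) = eCW cs k (usq k v) t :=
  phi0_ι cs k v ι₀ _

lemma e_comm_CW (t₁ t₂ : Refl cs) :
    eCW cs k (usq k v) t₁ * eCW cs k (usq k v) t₂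
      = eCW cs k (usq k v) t₂ * eCW cs k (usq k v) t₁ := by
  have := RingQuot.mkAlgHom_rel k (CWrel.comm (cs := cs) (k := k) (u := usq k v) t₁ t₂)
  simpa only [map_mul, eCW] using this

lemma e_conj_CW (t t₁ : Refl cs) :
    eCW cs k (usq k v) t * eCW cs k (usq k v) t₁
      = eCW cs k (usq k v) t * eCW cs k (usq k v) (conjR cs t.1 t₁) := by
  have := RingQuot.mkAlgHom_rel k (CWrel.conj (cs := cs) (k := k) (u := usq k v) t t₁)
  simpa only [map_mul, eCW] using this

lemma hiu (hinvol : ∀ c : k, ι₀ (ι₀ c) = c) (hιv : ∀ i : B, ι₀ ((v i : k)) = (((v i)⁻¹ : kˣ) : k))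
    (i : B) : ι₀ (usq k v i) = (((v i)⁻¹ : kˣ) : k) ^ 2 := by
  rw [usq, map_pow, hιv]

lemma hiv' (hinvol : ∀ c : k, ι₀ (ι₀ c) = c) (hιv : ∀ i : B, ι₀ ((v i : k)) = (((v i)⁻¹ : kˣ) : k))
    (i : B) : ι₀ ((((v i)⁻¹ : kˣ) : k)) = (v i : k) := by
  conv_rhs => rw [← hinvol ((v i : k)), hιv]

lemma hiuinv (hinvol : ∀ c : k, ι₀ (ι₀ c) = c)
    (hιv : ∀ i : B, ι₀ ((v i : k)) = (((v i)⁻¹ : kˣ) : k)) (i : B) :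
    ι₀ ((((v i)⁻¹ : kˣ) : k) ^ 2) = usq k v i := by
  rw [map_pow, hiv' k v ι₀ hinvol hιv, usq]

lemma phi0_rel (hinvol : ∀ c : k, ι₀ (ι₀ c) = c)
    (hιv : ∀ i : B, ι₀ ((v i : k)) = (((v i)⁻¹ : kˣ) : k))
    {x y : FreeAlgebra k (Gen cs)} (h : CWrel cs k (usq k v) x y) :
    phi0 cs k v ι₀ x = phi0 cs k v ι₀ y := by
  induction h with
  | braid i j hij =>
      rw [map_list_prod, map_list_prod, List.map_map, List.map_map]
      have : (phi0 cs k v ι₀) ∘ (gf cs k) = gInv cs k v := by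
        funext i; exact phi0_gf cs k v ι₀ i
      rw [this]
      exact braid_gInv cs k v i j hij
  | idem t => rw [map_mul, phi0_ef, e_mul_e]
  | comm t₁ t₂ => rw [map_mul, map_mul, phi0_ef, phi0_ef, e_comm_CW]
  | conj t t₁ => rw [map_mul, map_mul, phi0_ef, phi0_ef, phi0_ef, e_conj_CW]
  | move i t => rw [map_mul, map_mul, phi0_ef, phi0_ef, phi0_gf, gInv_move]
  | quad i =>
      simp only [map_mul, map_add, map_one, phi0_gf, phi0_ef, phi0_algebraMap]
      rw [gInv_sq, map_sub, map_one, hiu k v ι₀ hinvol hιv, Algebra.smul_def, ← mul_assoc]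

/-- The involution on `C_W`, as a ring homomorphism. -/
def phi (hinvol : ∀ c : k, ι₀ (ι₀ c) = c)
    (hιv : ∀ i : B, ι₀ ((v i : k)) = (((v i)⁻¹ : kˣ) : k)) :
    CW cs k (usq k v) →+* CW cs k (usq k v) :=
  RingQuot.lift ⟨phi0 cs k v ι₀, fun _ _ h => phi0_rel cs k v ι₀ hinvol hιv h⟩

variable (hinvol : ∀ c : k, ι₀ (ι₀ c) = c)
variable (hιv : ∀ i : B, ι₀ ((v i : k)) = (((v i)⁻¹ : kˣ) : k))

lemma phi_mk (x : FreeAlgebra k (Gen cs)) :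
    phi cs k v ι₀ hinvol hιv (RingQuot.mkRingHom (CWrel cs k (usq k v)) x)
      = phi0 cs k v ι₀ x :=
  RingQuot.lift_mkRingHom_apply _ _ x

lemma mkAlgHom_eq_mk (x : FreeAlgebra k (Gen cs)) :
    RingQuot.mkAlgHom k (CWrel cs k (usq k v)) x
      = RingQuot.mkRingHom (CWrel cs k (usq k v)) x := by
  rw [← RingQuot.mkAlgHom_coe k (CWrel cs k (usq k v))]; rfl

lemma phi_g (i : B) :
    phi cs k v ι₀ hinvol hιv (gCW cs k (usq k v) i) = gInv cs k v i := by
  rw [show gCW cs k (usq k v) i = RingQuot.mkRingHom (CWrel cs k (usq k v)) (gf cs k i)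
    from mkAlgHom_eq_mk cs k v _, phi_mk, phi0_gf]

lemma phi_e (t : Refl cs) :
    phi cs k v ι₀ hinvol hιv (eCW cs k (usq k v) t) = eCW cs k (usq k v) t := by
  conv_lhs => rw [show eCW cs k (usq k v) t = RingQuot.mkRingHom (CWrel cs k (usq k v)) (ef cs k t)
    from mkAlgHom_eq_mk cs k v _]
  rw [phi_mk, phi0_ef]

lemma phi_algebraMap (c : k) :
    phi cs k v ι₀ hinvol hιv (algebraMap k (CW cs k (usq k v)) c)
      = algebraMap k (CW cs k (usq k v)) (ι₀ c) := by
  have : algebraMap k (CW cs k (usq k v)) c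
      = RingQuot.mkRingHom (CWrel cs k (usq k v)) (algebraMap k (FreeAlgebra k (Gen cs)) c) := by
    rw [← mkAlgHom_eq_mk, AlgHom.commutes]
  rw [this, phi_mk, phi0_algebraMap]

lemma phi_gInv (i : B) :
    phi cs k v ι₀ hinvol hιv (gInv cs k v i) = gCW cs k (usq k v) i := by
  rw [gInv, map_add, phi_g, Algebra.smul_def, map_mul, phi_algebraMap, map_mul, map_add,
    map_one, phi_e, phi_g, map_sub, map_one, hiuinv k v ι₀ hinvol hιv, ← Algebra.smul_def]
  exact gInv_recover cs k v i

lemma phi_phi (x : CW cs k (usq k v)) :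
    phi cs k v ι₀ hinvol hιv (phi cs k v ι₀ hinvol hιv x) = x := by
  obtain ⟨y, rfl⟩ := RingQuot.mkRingHom_surjective (CWrel cs k (usq k v)) x
  induction y using FreeAlgebra.induction with
  | grade0 c =>
      rw [← mkAlgHom_eq_mk, AlgHom.commutes, phi_algebraMap, phi_algebraMap, hinvol]
  | grade1 x =>
      rcases x with i | t
      · rw [show RingQuot.mkRingHom (CWrel cs k (usq k v)) (FreeAlgebra.ι k (Sum.inl i))
            = gCW cs k (usq k v) i from (mkAlgHom_eq_mk cs k v _).symm,
          phi_g, phi_gInv]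
      · rw [show RingQuot.mkRingHom (CWrel cs k (usq k v)) (FreeAlgebra.ι k (Sum.inr t))
            = eCW cs k (usq k v) t from (mkAlgHom_eq_mk cs k v _).symm,
          phi_e, phi_e]
  | mul a b ha hb => rw [map_mul, map_mul, map_mul, ha, hb]
  | add a b ha hb => rw [map_add, map_add, map_add, ha, hb]

lemma val_units_prod {A : Type} [Monoid A] (f : B → Aˣ) (l : List B) :
    (((l.map f).prod : Aˣ) : A) = (l.map fun i => ((f i : A))).prod := by
  rw [show (((l.map f).prod : Aˣ) : A) = Units.coeHom A ((l.map f).prod) from rfl,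
    map_list_prod, List.map_map]
  rfl

lemma Tquad (i : B) :
    THW M k (usq k v) i * THW M k (usq k v) i
      = algebraMap k (HW M k (usq k v)) (usq k v i) + (usq k v i - 1) • THW M k (usq k v) i := by
  have := RingQuot.mkAlgHom_rel k (Hrel.quad (M := M) (k := k) (u := usq k v) i)
  simp only [map_mul, map_add, AlgHom.commutes] at this
  unfold THW
  rw [this, Algebra.smul_def]

lemma THW_mul_X (i : B) :
    THW M k (usq k v) i *
      (((((v i)⁻¹ : kˣ) : k) ^ 2) • THW M k (usq k v) i
        + algebraMap k (HW M k (usq k v)) ((((v i)⁻¹ : kˣ) : k) ^ 2 - 1)) = 1 ∧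
    (((((v i)⁻¹ : kˣ) : k) ^ 2) • THW M k (usq k v) i
        + algebraMap k (HW M k (usq k v)) ((((v i)⁻¹ : kˣ) : k) ^ 2 - 1)) *
      THW M k (usq k v) i = 1 := by
  have hcu := cu_one k v i
  have hq := Tquad (M := M) k v i
  have hz : (((v i)⁻¹ : kˣ) : k) ^ 2 * (usq k v i - 1) + ((((v i)⁻¹ : kˣ) : k) ^ 2 - 1) = 0 := by
    linear_combination hcu
  constructor
  · rw [mul_add, mul_smul_comm, hq,
      ← Algebra.commutes ((((v i)⁻¹ : kˣ) : k) ^ 2 - 1) (THW M k (usq k v) i),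
      ← Algebra.smul_def, smul_add, smul_smul, add_assoc, ← add_smul,
      Algebra.smul_def, ← map_mul, hcu, map_one, hz, zero_smul, add_zero]
  · rw [add_mul, smul_mul_assoc, hq, ← Algebra.smul_def, smul_add, smul_smul, add_assoc,
      ← add_smul, Algebra.smul_def, ← map_mul, hcu, map_one, hz, zero_smul, add_zero]

end Aux

/-- Over `k = ℤ[v_s^{±1}]` (encoded by a commutative ring `k` with an
involution `ι₀` and units `v_s` satisfying `ι₀(v_s) = v_s⁻¹`, `u_s = v_s²`), there is an
involutive ring automorphism of `C_W` mapping `v_s ↦ v_s⁻¹` (on scalars, via `ι₀`),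
`H_w ↦ (H_{w⁻¹})⁻¹` and `e_{W₀} ↦ e_{W₀}`, compatible with Lusztig's involution of the
Iwahori–Hecke algebra `H_W` through the projection `𝔭`. -/
theorem statement7 {B : Type} {M : CoxeterMatrix B} {W : Type} [Group W]
    (cs : CoxeterSystem M W) (k : Type) [CommRing k]
    (ι₀ : k ≃+* k) (hinvol : ∀ c : k, ι₀ (ι₀ c) = c)
    (v : B → kˣ) (hv : ∀ i j : B, IsConj (cs.simple i) (cs.simple j) → v i = v j)
    (hιv : ∀ i : B, ι₀ ((v i : k)) = (((v i)⁻¹ : kˣ) : k))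
    (Hfam : W → CW cs k (usq k v))
    (hH : ∀ l : List B, cs.IsReduced l →
      Hfam (cs.wordProd l) =
        (l.map fun i => (-((((v i)⁻¹ : kˣ)) : k)) • gCW cs k (usq k v) i).prod) :
    ∃ Φ : CW cs k (usq k v) ≃+* CW cs k (usq k v),
      (∀ x, Φ (Φ x) = x) ∧
      (∀ c : k, Φ (algebraMap k (CW cs k (usq k v)) c) =
        algebraMap k (CW cs k (usq k v)) (ι₀ c)) ∧
      (∀ J : Finset (Refl cs), Φ (eJ cs k (usq k v) J) = eJ cs k (usq k v) J) ∧
      (∀ w : W, Φ (Hfam w) * Hfam w⁻¹ = 1 ∧ Hfam w⁻¹ * Φ (Hfam w) = 1) ∧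
      (∀ p : CW cs k (usq k v) →ₐ[k] HW M k (usq k v),
        (∀ i : B, p (gCW cs k (usq k v) i) = THW M k (usq k v) i) →
        (∀ t : Refl cs, p (eCW cs k (usq k v) t) = 1) →
        ∀ HfamH : W → HW M k (usq k v),
        (∀ l : List B, cs.IsReduced l →
          HfamH (cs.wordProd l) =
            (l.map fun i => (-((((v i)⁻¹ : kˣ)) : k)) • THW M k (usq k v) i).prod) →
        ∀ Ψ : HW M k (usq k v) ≃+* HW M k (usq k v),
          (∀ c : k, Ψ (algebraMap k (HW M k (usq k v)) c) =
            algebraMap k (HW M k (usq k v)) (ι₀ c)) →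
          (∀ w : W, Ψ (HfamH w) * HfamH w⁻¹ = 1 ∧ HfamH w⁻¹ * Ψ (HfamH w) = 1) →
          ∀ x : CW cs k (usq k v), p (Φ x) = Ψ (p x)) := by
  -- the units `H_i` with inverse `(-v_i) • gInv`
  have hmulinv : ∀ i : B,
      ((-(((v i)⁻¹ : kˣ) : k)) • gCW cs k (usq k v) i) * ((-((v i : kˣ) : k)) • gInv cs k v i)
        = 1 := by
    intro i
    rw [smul_mul_smul_comm, neg_mul_neg, ← Units.val_mul, inv_mul_cancel, Units.val_one,
      one_smul, g_mul_gInv]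
  have hinvmul : ∀ i : B,
      ((-((v i : kˣ) : k)) • gInv cs k v i) * ((-(((v i)⁻¹ : kˣ) : k)) • gCW cs k (usq k v) i)
        = 1 := by
    intro i
    rw [smul_mul_smul_comm, neg_mul_neg, ← Units.val_mul, mul_inv_cancel, Units.val_one,
      one_smul, gInv_mul_g]
  set Hu : B → (CW cs k (usq k v))ˣ := fun i =>
    ⟨(-(((v i)⁻¹ : kˣ) : k)) • gCW cs k (usq k v) i,
     (-((v i : kˣ) : k)) • gInv cs k v i, hmulinv i, hinvmul i⟩ with hHu
  have phiH : ∀ i : B,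
      phi cs k v ι₀ hinvol hιv ((-(((v i)⁻¹ : kˣ) : k)) • gCW cs k (usq k v) i)
        = (((Hu i)⁻¹ : (CW cs k (usq k v))ˣ) : CW cs k (usq k v)) := by
    intro i
    rw [Algebra.smul_def, map_mul, phi_algebraMap, phi_g, map_neg, hiv' k v ι₀ hinvol hιv,
      ← Algebra.smul_def]
    rfl
  refine ⟨{ toFun := phi cs k v ι₀ hinvol hιv,
            invFun := phi cs k v ι₀ hinvol hιv,
            left_inv := phi_phi cs k v ι₀ hinvol hιv,
            right_inv := phi_phi cs k v ι₀ hinvol hιv,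
            map_mul' := map_mul _,
            map_add' := map_add _ }, ?_, ?_, ?_, ?_, ?_⟩
  · exact phi_phi cs k v ι₀ hinvol hιv
  · exact phi_algebraMap cs k v ι₀ hinvol hιv
  · intro J
    show phi cs k v ι₀ hinvol hιv (eJ cs k (usq k v) J) = eJ cs k (usq k v) J
    rw [eJ]
    refine (Finset.map_noncommProd J _ _ (phi cs k v ι₀ hinvol hιv)).trans ?_
    exact Finset.noncommProd_congr rfl (fun t _ => phi_e cs k v ι₀ hinvol hιv t) _
  · intro w
    obtain ⟨l, hlen, rfl⟩ := cs.exists_reduced_word w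
    have hred : cs.IsReduced l := by unfold CoxeterSystem.IsReduced; exact hlen
    have hred' : cs.IsReduced l.reverse := (cs.isReduced_reverse_iff l).mpr hred
    have hw' : (cs.wordProd l)⁻¹ = cs.wordProd l.reverse := (cs.wordProd_reverse l).symm
    have hfam2 : Hfam (cs.wordProd l)⁻¹
        = (((l.reverse.map Hu).prod : (CW cs k (usq k v))ˣ) : CW cs k (usq k v)) := by
      rw [hw', hH l.reverse hred', val_units_prod]
    have hfam1 : phi cs k v ι₀ hinvol hιv (Hfam (cs.wordProd l))
        = ((((l.map fun i => (Hu i)⁻¹).prod : (CW cs k (usq k v))ˣ)) : CW cs k (usq k v)) := by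
      rw [hH l hred, map_list_prod, List.map_map, val_units_prod]
      exact congrArg List.prod (List.map_congr_left fun i _ => phiH i)
    have hPP : ((l.map fun i => (Hu i)⁻¹).prod : (CW cs k (usq k v))ˣ)
        = ((l.reverse.map Hu).prod)⁻¹ := by
      rw [List.prod_inv_reverse, List.map_map, List.map_reverse, List.reverse_reverse]
      rfl
    constructor
    · show phi cs k v ι₀ hinvol hιv (Hfam (cs.wordProd l)) * Hfam (cs.wordProd l)⁻¹ = 1
      rw [hfam1, hfam2, hPP, ← Units.val_mul, inv_mul_cancel, Units.val_one]
    · show Hfam (cs.wordProd l)⁻¹ * phi cs k v ι₀ hinvol hιv (Hfam (cs.wordProd l)) = 1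
      rw [hfam1, hfam2, hPP, ← Units.val_mul, mul_inv_cancel, Units.val_one]
  · intro p hpg hpe HfamH hHfamH Ψ hΨc hΨH x
    -- the value of `Ψ` on the generators `T_i`
    have hΨT : ∀ i : B, Ψ (THW M k (usq k v) i)
        = (((v i)⁻¹ : kˣ) : k) ^ 2 • THW M k (usq k v) i
          + algebraMap k (HW M k (usq k v)) ((((v i)⁻¹ : kˣ) : k) ^ 2 - 1) := by
      intro i
      have hred1 : cs.IsReduced [i] := by
        show cs.length (cs.wordProd [i]) = _
        rw [cs.wordProd_singleton, cs.length_simple, List.length_singleton]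
      have h1 : HfamH (cs.simple i) = (-(((v i)⁻¹ : kˣ) : k)) • THW M k (usq k v) i := by
        have := hHfamH [i] hred1
        rw [cs.wordProd_singleton] at this
        simpa using this
      have h2 := hΨH (cs.simple i)
      rw [cs.inv_simple, h1] at h2
      obtain ⟨hX1, hX2⟩ := THW_mul_X (M := M) k v i
      have hAX : ((-(((v i)⁻¹ : kˣ) : k)) • THW M k (usq k v) i) *
          ((-((v i : kˣ) : k)) • ((((v i)⁻¹ : kˣ) : k) ^ 2 • THW M k (usq k v) i
            + algebraMap k (HW M k (usq k v)) ((((v i)⁻¹ : kˣ) : k) ^ 2 - 1))) = 1 := by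
        rw [smul_mul_smul_comm, neg_mul_neg, ← Units.val_mul, inv_mul_cancel, Units.val_one,
          one_smul]
        exact hX1
      have hEq : Ψ ((-(((v i)⁻¹ : kˣ) : k)) • THW M k (usq k v) i)
          = (-((v i : kˣ) : k)) • ((((v i)⁻¹ : kˣ) : k) ^ 2 • THW M k (usq k v) i
            + algebraMap k (HW M k (usq k v)) ((((v i)⁻¹ : kˣ) : k) ^ 2 - 1)) :=
        left_inv_eq_right_inv h2.1 hAX
      have hT : THW M k (usq k v) i
          = (-((v i : kˣ) : k)) • ((-(((v i)⁻¹ : kˣ) : k)) • THW M k (usq k v) i) := by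
        rw [smul_smul, neg_mul_neg, ← Units.val_mul, mul_inv_cancel, Units.val_one, one_smul]
      conv_lhs => rw [hT]
      rw [Algebra.smul_def, map_mul, hΨc, map_neg, hιv, hEq,
        ← Algebra.smul_def, smul_smul, neg_mul_neg, ← Units.val_mul, inv_mul_cancel,
        Units.val_one, one_smul]
    obtain ⟨y, rfl⟩ := RingQuot.mkRingHom_surjective (CWrel cs k (usq k v)) x
    induction y using FreeAlgebra.induction with
    | grade0 c =>
        rw [show RingQuot.mkRingHom (CWrel cs k (usq k v)) (algebraMap k _ c)
            = algebraMap k (CW cs k (usq k v)) c by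
          rw [← mkAlgHom_eq_mk cs k v, AlgHom.commutes]]
        show p (phi cs k v ι₀ hinvol hιv (algebraMap k (CW cs k (usq k v)) c)) = _
        rw [phi_algebraMap, p.commutes, p.commutes, hΨc]
    | grade1 z =>
        rcases z with i | t
        · rw [show RingQuot.mkRingHom (CWrel cs k (usq k v)) (FreeAlgebra.ι k (Sum.inl i))
              = gCW cs k (usq k v) i from (mkAlgHom_eq_mk cs k v _).symm]
          show p (phi cs k v ι₀ hinvol hιv (gCW cs k (usq k v) i)) = _
          rw [phi_g, gInv, map_add, map_smul, map_mul, map_add, map_one, hpe, one_mul, hpg,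
            hΨT, Algebra.algebraMap_eq_smul_one]
          module
        · rw [show RingQuot.mkRingHom (CWrel cs k (usq k v)) (FreeAlgebra.ι k (Sum.inr t))
              = eCW cs k (usq k v) t from (mkAlgHom_eq_mk cs k v _).symm]
          show p (phi cs k v ι₀ hinvol hιv (eCW cs k (usq k v) t)) = _
          rw [phi_e, hpe, map_one]
    | mul a b ha hb =>
        show p (phi cs k v ι₀ hinvol hιv _) = _
        rw [map_mul, map_mul, map_mul, map_mul, map_mul]
        exact congrArg₂ (· * ·) ha hb
    | add a b ha hb =>
        show p (phi cs k v ι₀ hinvol hιv _) = _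
        rw [map_add, map_add, map_add, map_add, map_add]
        exact congrArg₂ (· + ·) ha hb

end CWpaper
end
end
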